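/- Assume n ≥ 2. If the constructed threshold instance (H,t) has a harmless set of size at least C(k,2)·(n−1) + k·n + m, where C(k,2) = k(k−1)/2, then the k-partite graph G contains a multicoloured clique on k vertices. -/

import Mathlib

/-- A set `S` is harmless for the threshold instance `(G, t)` if every vertex `v`
has strictly fewer than `t v` neighbours in `S`. -/
def HarmlessSet {W : Type*} (G : SimpleGraph W) (t : W → ℕ) (S : Set W) : Prop :=
  ∀ v : W, (G.neighborSet v ∩ S).ncard < t v

/-- Raw vertices of the constructed graph `H` for the reduction from
Multicoloured Clique: the vertices `a_F`, `b_F`, the dark/light/XOR vertices of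
the selection gadgets, the four port vertices of each port gadget
(`plus : Bool` distinguishes `p⁺` from `p⁻`, `side : Bool` distinguishes the
side `i` from the side `j`), the light/dark/XOR vertices of the test gadgets,
and the apices `a_{ij}`. -/
inductive HVert (k n : ℕ) : Type where
  | aF : HVert k n
  | bF : HVert k n
  | selD : Fin k → Fin n → HVert k n
  | selL : Fin k → Fin n → HVert k n
  | selX : Fin k → Fin n → HVert k n
  | port : Fin k → Fin k → Bool → Bool → HVert k n
  | testL : Fin k → Fin k → Fin n → Fin n → Fin n → HVert k n
  | testD : Fin k → Fin k → Fin n → Fin n → HVert k n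
  | testX : Fin k → Fin k → Fin n → Fin n → Fin n → HVert k n
  | apex : Fin k → Fin k → HVert k n

/-- Which raw vertices actually exist: port gadgets and apices exist for every
pair `i < j`, and the test gadget `T_{xy}` for the pair `i < j` exists precisely
when `v^i_x v^j_y` is an edge of `G` (encoded by the relation `E`). -/
def HValid {k n : ℕ} (E : Fin k → Fin n → Fin k → Fin n → Prop) : HVert k n → Prop
  | .port i j _ _ => i < j
  | .apex i j => i < j
  | .testL i j x y _ => i < j ∧ E i x j y
  | .testD i j x y => i < j ∧ E i x j y
  | .testX i j x y _ => i < j ∧ E i x j y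
  | _ => True

/-- The base adjacency relation of the constructed graph `H` (symmetrised by
`SimpleGraph.fromRel`).  Indices `x y r : Fin n` are 0-based, representing the
paper's 1-based indices `x+1`, `y+1`, `r+1`; so `p⁺` is adjacent to the light
vertex `l_{r+1}` of `T_{(x+1)(y+1)}` iff `r + 1 ≤ n − (x + 1)`,
i.e. `r + x + 2 ≤ n`, and `p⁻` to the remaining light vertices. -/
def hRel {k n : ℕ} : HVert k n → HVert k n → Prop
  | .aF, .bF => True
  | .aF, .selX _ _ => True
  | .aF, .testX _ _ _ _ _ => True
  | .aF, .port _ _ _ _ => True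
  | .aF, .apex _ _ => True
  | .selX i s, .selD i' s' => i = i' ∧ s = s'
  | .selX i s, .selL i' s' => i = i' ∧ s = s'
  | .port i j plus side, .selL i' _ => (if side then j else i) = i' ∧ plus = true
  | .port i j plus side, .selD i' _ => (if side then j else i) = i' ∧ plus = false
  | .port i j plus side, .testL i' j' x y r =>
      i = i' ∧ j = j' ∧
      ((plus = true ∧ (r : ℕ) + (if side then (y : ℕ) else (x : ℕ)) + 2 ≤ n) ∨
       (plus = false ∧ n < (r : ℕ) + (if side then (y : ℕ) else (x : ℕ)) + 2))
  | .testX i j x y _, .testD i' j' x' y' => i = i' ∧ j = j' ∧ x = x' ∧ y = y'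
  | .testX i j x y r, .testL i' j' x' y' r' =>
      i = i' ∧ j = j' ∧ x = x' ∧ y = y' ∧ r = r'
  | .apex i j, .testL i' j' _ _ _ => i = i' ∧ j = j'
  | _, _ => False

/-- The constructed graph `H` of the reduction, on the valid vertices. -/
def HBig {k n : ℕ} (E : Fin k → Fin n → Fin k → Fin n → Prop) :
    SimpleGraph {v : HVert k n // HValid E v} :=
  SimpleGraph.fromRel (fun a b => hRel a.1 b.1)

/-- The threshold function of the constructed instance: `a_F, b_F` get
threshold `1`, the XOR vertices get `2`, ports and apices get `n + 1`, and all
light and dark vertices of selection and test gadgets get their degree plus one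
(so they impose no constraint). -/
noncomputable def hT {k n : ℕ} (E : Fin k → Fin n → Fin k → Fin n → Prop) :
    {v : HVert k n // HValid E v} → ℕ := fun v =>
  match v.1 with
  | .aF => 1
  | .bF => 1
  | .selX _ _ => 2
  | .testX _ _ _ _ _ => 2
  | .port _ _ _ _ => n + 1
  | .apex _ _ => n + 1
  | _ => ((HBig E).neighborSet v).ncard + 1

/-- The total number `m` of edges of the multicoloured-clique instance,
counting each edge once (with its smaller colour first). -/
noncomputable def mTotal {k n : ℕ} (E : Fin k → Fin n → Fin k → Fin n → Prop) : ℕ :=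
  {q : (Fin k × Fin n) × (Fin k × Fin n) |
    q.1.1 < q.2.1 ∧ E q.1.1 q.1.2 q.2.1 q.2.2}.ncard


/-! ### Auxiliary material for the soundness proof -/

namespace MCCAux

open Finset

theorem finCardLt (n c : ℕ) (h : c ≤ n) :
    ((Finset.univ.filter (fun r : Fin n => (r : ℕ) < c)).card = c) := by
  have : ((Finset.univ.filter (fun r : Fin n => (r : ℕ) < c)).card
      = (Finset.univ : Finset (Fin c)).card) :=
    Finset.card_bij'
      (fun r hr => (⟨(r : ℕ), (Finset.mem_filter.mp hr).2⟩ : Fin c))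
      (fun r _ => (⟨(r : ℕ), lt_of_lt_of_le r.2 h⟩ : Fin n))
      (fun a ha => Finset.mem_univ _)
      (fun a _ => Finset.mem_filter.mpr ⟨Finset.mem_univ _, a.2⟩)
      (fun a ha => by simp) (fun a ha => by simp)
  simpa using this

theorem cardPairsLt (k : ℕ) :
    ((Finset.univ : Finset (Fin k × Fin k)).filter (fun p => p.1 < p.2)).card
      = Nat.choose k 2 := by
  classical
  set A := ((Finset.univ : Finset (Fin k × Fin k)).filter (fun p => p.1 < p.2)) with hA
  set A' := ((Finset.univ : Finset (Fin k × Fin k)).filter (fun p => p.2 < p.1)) with hA'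
  have hswap : A.card = A'.card := by
    apply Finset.card_bij' (fun p _ => p.swap) (fun p _ => p.swap)
    · intro a _; exact Prod.swap_swap a
    · intro a _; exact Prod.swap_swap a
    · intro a ha
      rw [hA'] at *
      rw [hA] at ha
      simp only [Finset.mem_filter, Finset.mem_univ, true_and, Prod.fst_swap,
        Prod.snd_swap] at *
      exact ha
    · intro a ha
      rw [hA'] at ha
      rw [hA] at *
      simp only [Finset.mem_filter, Finset.mem_univ, true_and, Prod.fst_swap,
        Prod.snd_swap] at *
      exact ha
  have hunion : A ∪ A' = (Finset.univ : Finset (Fin k)).offDiag := by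
    ext p
    simp only [hA, hA', Finset.mem_union, Finset.mem_filter, Finset.mem_univ, true_and,
      Finset.mem_offDiag]
    constructor
    · rintro (h | h)
      exacts [ne_of_lt h, (ne_of_lt h).symm]
    · intro h
      rcases lt_or_gt_of_ne h with hlt | hlt
      exacts [Or.inl hlt, Or.inr hlt]
  have hdisj : Disjoint A A' := by
    rw [Finset.disjoint_left]
    intro p hp hp'
    simp only [hA, hA', Finset.mem_filter] at hp hp'
    exact absurd (hp.2.trans hp'.2) (lt_irrefl _)
  have hcard : A.card + A'.card = k * k - k := by
    rw [← Finset.card_union_of_disjoint hdisj, hunion, Finset.offDiag_card]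
    simp
  have hkk : k ≤ k * k := by nlinarith
  have h2 : 2 * A.card = k * k - k := by omega
  rw [Nat.choose_two_right]
  have hmul : k * (k - 1) = k * k - k := by rw [Nat.mul_sub, mul_one]
  omega


variable {k n : ℕ} {E : Fin k → Fin n → Fin k → Fin n → Prop}

private def hvEnc : HVert k n →
    Fin 10 × Option (Fin k) × Option (Fin k) × Option (Fin n) × Option (Fin n) ×
      Option (Fin n) × Bool × Bool
  | HVert.aF => (0, none, none, none, none, none, false, false)
  | HVert.bF => (1, none, none, none, none, none, false, false)
  | HVert.selD i s => (2, some i, none, some s, none, none, false, false)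
  | HVert.selL i s => (3, some i, none, some s, none, none, false, false)
  | HVert.selX i s => (4, some i, none, some s, none, none, false, false)
  | HVert.port i j b sd => (5, some i, some j, none, none, none, b, sd)
  | HVert.testL i j x y r => (6, some i, some j, some x, some y, some r, false, false)
  | HVert.testD i j x y => (7, some i, some j, some x, some y, none, false, false)
  | HVert.testX i j x y r => (8, some i, some j, some x, some y, some r, false, false)
  | HVert.apex i j => (9, some i, some j, none, none, none, false, false)

instance instFiniteHVert : Finite (HVert k n) := by
  apply Finite.of_injective (hvEnc (k := k) (n := n))
  intro a b h
  cases a <;> cases b <;> simp_all [hvEnc]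

/-- The vertex type of the constructed graph. -/
abbrev HV (k n : ℕ) (E : Fin k → Fin n → Fin k → Fin n → Prop) : Type :=
  {v : HVert k n // HValid E v}

lemma adj_iff (a b : HV k n E) :
    (HBig E).Adj a b ↔ a ≠ b ∧ (hRel a.1 b.1 ∨ hRel b.1 a.1) :=
  SimpleGraph.fromRel_adj _ a b

variable {S : Set (HV k n E)}

lemma not_mem_of_adj_one (hH : HarmlessSet (HBig E) (hT E) S) {x w : HV k n E}
    (ht : hT E x = 1) (hxw : (HBig E).Adj x w) : w ∉ S := by
  intro hw
  have h1 := hH x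
  rw [ht] at h1
  have hsub : ({w} : Set (HV k n E)) ⊆ (HBig E).neighborSet x ∩ S := by
    intro z hz
    rcases Set.mem_singleton_iff.mp hz with rfl
    exact ⟨hxw, hw⟩
  have := Set.ncard_le_ncard hsub (Set.toFinite _)
  rw [Set.ncard_singleton] at this
  omega

lemma not_both_of_adj_two (hH : HarmlessSet (HBig E) (hT E) S) {x u w : HV k n E}
    (ht : hT E x = 2) (hu : (HBig E).Adj x u) (hw : (HBig E).Adj x w)
    (hne : u ≠ w) (hus : u ∈ S) (hws : w ∈ S) : False := by
  have h2 := hH x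
  rw [ht] at h2
  have hsub : ({u, w} : Set (HV k n E)) ⊆ (HBig E).neighborSet x ∩ S := by
    intro z hz
    rcases Set.mem_insert_iff.mp hz with rfl | hz'
    · exact ⟨hu, hus⟩
    · rcases Set.mem_singleton_iff.mp hz' with rfl
      exact ⟨hw, hws⟩
  have := Set.ncard_le_ncard hsub (Set.toFinite _)
  rw [Set.ncard_pair hne] at this
  omega

lemma ncard_le_of_subset_nbhd (hH : HarmlessSet (HBig E) (hT E) S) {x : HV k n E}
    {X : Set (HV k n E)} (ht : hT E x = n + 1)
    (hX : ∀ v ∈ X, (HBig E).Adj x v ∧ v ∈ S) : X.ncard ≤ n := by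
  have h1 := hH x
  rw [ht] at h1
  have hsub : X ⊆ (HBig E).neighborSet x ∩ S := fun v hv => ⟨(hX v hv).1, (hX v hv).2⟩
  have := Set.ncard_le_ncard hsub (Set.toFinite _)
  omega

lemma good_of_mem (hH : HarmlessSet (HBig E) (hT E) S) {w : HV k n E} (hw : w ∈ S) :
    (∃ i s, w.1 = HVert.selD i s) ∨ (∃ i s, w.1 = HVert.selL i s) ∨
      (∃ i j x y, w.1 = HVert.testD i j x y) ∨
      (∃ i j x y r, w.1 = HVert.testL i j x y r) := by
  obtain ⟨v, hv⟩ := w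
  have haF : HValid E HVert.aF := trivial
  cases v with
  | aF =>
      exact absurd hw (not_mem_of_adj_one hH (x := ⟨HVert.bF, trivial⟩) rfl
        ((adj_iff _ _).mpr ⟨(by intro hc; cases hc), Or.inr trivial⟩))
  | bF =>
      exact absurd hw (not_mem_of_adj_one hH (x := ⟨HVert.aF, haF⟩) rfl
        ((adj_iff _ _).mpr ⟨by simp, Or.inl trivial⟩))
  | selX i s =>
      exact absurd hw (not_mem_of_adj_one hH (x := ⟨HVert.aF, haF⟩) rfl
        ((adj_iff _ _).mpr ⟨by simp, Or.inl trivial⟩))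
  | testX i j x y r =>
      exact absurd hw (not_mem_of_adj_one hH (x := ⟨HVert.aF, haF⟩) rfl
        ((adj_iff _ _).mpr ⟨by simp, Or.inl trivial⟩))
  | port i j b sd =>
      exact absurd hw (not_mem_of_adj_one hH (x := ⟨HVert.aF, haF⟩) rfl
        ((adj_iff _ _).mpr ⟨by simp, Or.inl trivial⟩))
  | apex i j =>
      exact absurd hw (not_mem_of_adj_one hH (x := ⟨HVert.aF, haF⟩) rfl
        ((adj_iff _ _).mpr ⟨by simp, Or.inl trivial⟩))
  | selD i s => exact Or.inl ⟨i, s, rfl⟩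
  | selL i s => exact Or.inr (Or.inl ⟨i, s, rfl⟩)
  | testD i j x y => exact Or.inr (Or.inr (Or.inl ⟨i, j, x, y, rfl⟩))
  | testL i j x y r => exact Or.inr (Or.inr (Or.inr ⟨i, j, x, y, r, rfl⟩))

/-! ### Distinguished subsets and index maps -/

def SelDSet (E : Fin k → Fin n → Fin k → Fin n → Prop) (i : Fin k) : Set (HV k n E) :=
  {v | ∃ s, v.1 = HVert.selD i s}

def SelLSet (E : Fin k → Fin n → Fin k → Fin n → Prop) (i : Fin k) : Set (HV k n E) :=
  {v | ∃ s, v.1 = HVert.selL i s}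

def PairDSet (E : Fin k → Fin n → Fin k → Fin n → Prop) (i j : Fin k) : Set (HV k n E) :=
  {v | ∃ x y, v.1 = HVert.testD i j x y}

def PairLSet (E : Fin k → Fin n → Fin k → Fin n → Prop) (i j : Fin k) : Set (HV k n E) :=
  {v | ∃ x y r, v.1 = HVert.testL i j x y r}

def ESet (E : Fin k → Fin n → Fin k → Fin n → Prop) (i j : Fin k) : Set (Fin n × Fin n) :=
  {p | E i p.1 j p.2}

noncomputable def mij (E : Fin k → Fin n → Fin k → Fin n → Prop) (i j : Fin k) : ℕ :=
  (ESet E i j).ncard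

def ridx (hn : 0 < n) : HV k n E → Fin n := fun v =>
  match v.1 with
  | HVert.selD _ s => s
  | HVert.selL _ s => s
  | HVert.testL _ _ _ _ r => r
  | _ => ⟨0, hn⟩

def gad (hn : 0 < n) : HV k n E → Fin n × Fin n := fun v =>
  match v.1 with
  | HVert.testD _ _ x y => (x, y)
  | HVert.testL _ _ x y _ => (x, y)
  | _ => (⟨0, hn⟩, ⟨0, hn⟩)

def idx : HV k n E → Fin k ⊕ ((Fin k × Fin k) ⊕ Unit) := fun v =>
  match v.1 with
  | HVert.selD i _ => Sum.inl i
  | HVert.selL i _ => Sum.inl i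
  | HVert.testD i j _ _ => Sum.inr (Sum.inl (i, j))
  | HVert.testL i j _ _ _ => Sum.inr (Sum.inl (i, j))
  | _ => Sum.inr (Sum.inr ())

lemma ridx_selD (hn : 0 < n) {v : HV k n E} {i : Fin k} {s : Fin n}
    (h : v.1 = HVert.selD i s) : ridx hn v = s := by simp [ridx, h]

lemma ridx_selL (hn : 0 < n) {v : HV k n E} {i : Fin k} {s : Fin n}
    (h : v.1 = HVert.selL i s) : ridx hn v = s := by simp [ridx, h]

lemma ridx_testL (hn : 0 < n) {v : HV k n E} {i j : Fin k} {x y r : Fin n}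
    (h : v.1 = HVert.testL i j x y r) : ridx hn v = r := by simp [ridx, h]

lemma gad_testD (hn : 0 < n) {v : HV k n E} {i j : Fin k} {x y : Fin n}
    (h : v.1 = HVert.testD i j x y) : gad hn v = (x, y) := by simp [gad, h]

lemma gad_testL (hn : 0 < n) {v : HV k n E} {i j : Fin k} {x y r : Fin n}
    (h : v.1 = HVert.testL i j x y r) : gad hn v = (x, y) := by simp [gad, h]

/-! ### Selection gadget counting -/

lemma sel_split (i : Fin k) :
    (S ∩ (SelDSet E i ∪ SelLSet E i)).ncard
      = (S ∩ SelDSet E i).ncard + (S ∩ SelLSet E i).ncard := by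
  rw [Set.inter_union_distrib_left]
  refine Set.ncard_union_eq ?_ (Set.toFinite _) (Set.toFinite _)
  rw [Set.disjoint_left]
  rintro v ⟨-, s, hv1⟩ ⟨-, s', hv2⟩
  rw [hv1] at hv2
  exact absurd hv2 (by simp)

lemma sel_xor (hH : HarmlessSet (HBig E) (hT E) S) {u w : HV k n E} {i : Fin k}
    {s : Fin n} (hu1 : u.1 = HVert.selD i s) (hw1 : w.1 = HVert.selL i s)
    (hus : u ∈ S) (hws : w ∈ S) : False := by
  refine not_both_of_adj_two hH (x := ⟨HVert.selX i s, trivial⟩) rfl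
    ((adj_iff _ _).mpr ⟨fun hc => ?_, Or.inl ?_⟩)
    ((adj_iff _ _).mpr ⟨fun hc => ?_, Or.inl ?_⟩)
    (fun hc => ?_) hus hws
  · rw [← hc] at hu1; simp at hu1
  · show hRel (HVert.selX i s) u.1
    rw [hu1]; exact ⟨rfl, rfl⟩
  · rw [← hc] at hw1; simp at hw1
  · show hRel (HVert.selX i s) w.1
    rw [hw1]; exact ⟨rfl, rfl⟩
  · rw [hc, hw1] at hu1; simp at hu1

lemma test_xor (hH : HarmlessSet (HBig E) (hT E) S) {u w : HV k n E} {i j : Fin k}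
    {x y r : Fin n} (hval : HValid E (HVert.testX i j x y r))
    (hu1 : u.1 = HVert.testD i j x y) (hw1 : w.1 = HVert.testL i j x y r)
    (hus : u ∈ S) (hws : w ∈ S) : False := by
  refine not_both_of_adj_two hH (x := ⟨HVert.testX i j x y r, hval⟩) rfl
    ((adj_iff _ _).mpr ⟨fun hc => ?_, Or.inl ?_⟩)
    ((adj_iff _ _).mpr ⟨fun hc => ?_, Or.inl ?_⟩)
    (fun hc => ?_) hus hws
  · rw [← hc] at hu1; simp at hu1
  · show hRel (HVert.testX i j x y r) u.1
    rw [hu1]; exact ⟨rfl, rfl, rfl, rfl⟩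
  · rw [← hc] at hw1; simp at hw1
  · show hRel (HVert.testX i j x y r) w.1
    rw [hw1]; exact ⟨rfl, rfl, rfl, rfl, rfl⟩
  · rw [hc, hw1] at hu1; simp at hu1

lemma sel_bound (hH : HarmlessSet (HBig E) (hT E) S) (hn : 0 < n) (i : Fin k) :
    (S ∩ (SelDSet E i ∪ SelLSet E i)).ncard ≤ n := by
  have hinj : Set.InjOn (ridx hn) (S ∩ (SelDSet E i ∪ SelLSet E i)) := by
    rintro u ⟨huS, hu⟩ w ⟨hwS, hw⟩ hr
    rcases hu with ⟨s, hu1⟩ | ⟨s, hu1⟩ <;> rcases hw with ⟨s', hw1⟩ | ⟨s', hw1⟩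
    · rw [ridx_selD hn hu1, ridx_selD hn hw1] at hr
      exact Subtype.ext (by rw [hu1, hw1, hr])
    · exfalso
      rw [ridx_selD hn hu1, ridx_selL hn hw1] at hr
      subst hr
      exact sel_xor hH hu1 hw1 huS hwS
    · exfalso
      rw [ridx_selL hn hu1, ridx_selD hn hw1] at hr
      subst hr
      exact sel_xor hH hw1 hu1 hwS huS
    · rw [ridx_selL hn hu1, ridx_selL hn hw1] at hr
      exact Subtype.ext (by rw [hu1, hw1, hr])
  have h := Set.ncard_le_ncard_of_injOn (ridx hn)
    (fun a _ => Set.mem_univ (ridx hn a)) hinj (Set.toFinite _)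
  simpa [Set.ncard_univ] using h


/-! ### Test (pair) gadget counting -/

lemma pair_split (i j : Fin k) :
    (S ∩ (PairDSet E i j ∪ PairLSet E i j)).ncard
      = (S ∩ PairDSet E i j).ncard + (S ∩ PairLSet E i j).ncard := by
  rw [Set.inter_union_distrib_left]
  refine Set.ncard_union_eq ?_ (Set.toFinite _) (Set.toFinite _)
  rw [Set.disjoint_left]
  rintro v ⟨-, x, y, hv1⟩ ⟨-, x', y', r', hv2⟩
  rw [hv1] at hv2
  exact absurd hv2 (by simp)

lemma pair_bound_tight (hH : HarmlessSet (HBig E) (hT E) S) (hn : 2 ≤ n) {i j : Fin k}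
    (hij : i < j) :
    (S ∩ (PairDSet E i j ∪ PairLSet E i j)).ncard ≤ mij E i j + (n - 1) ∧
      ((S ∩ (PairDSet E i j ∪ PairLSet E i j)).ncard = mij E i j + (n - 1) →
        ∃ x y, ∃ hE : E i x j y,
          ∀ r : Fin n, (⟨HVert.testL i j x y r, ⟨hij, hE⟩⟩ : HV k n E) ∈ S) := by
  have hn0 : 0 < n := by omega
  set L := S ∩ PairLSet E i j with hLdef
  set D := S ∩ PairDSet E i j with hDdef
  have hsplit : (S ∩ (PairDSet E i j ∪ PairLSet E i j)).ncard = D.ncard + L.ncard :=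
    pair_split i j
  have hvalL : ∀ v ∈ L, ∃ x y r, v.1 = HVert.testL i j x y r ∧ E i x j y := by
    rintro v ⟨hvS, xx, yy, rr, hv1⟩
    refine ⟨xx, yy, rr, hv1, ?_⟩
    have hv2 := v.2
    rw [hv1] at hv2
    exact hv2.2
  have hvalD : ∀ v ∈ D, ∃ x y, v.1 = HVert.testD i j x y ∧ E i x j y := by
    rintro v ⟨hvS, xx, yy, hv1⟩
    refine ⟨xx, yy, hv1, ?_⟩
    have hv2 := v.2
    rw [hv1] at hv2
    exact hv2.2
  have hLn : L.ncard ≤ n := by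
    refine ncard_le_of_subset_nbhd hH (x := ⟨HVert.apex i j, hij⟩) rfl ?_
    intro v hv
    obtain ⟨xx, yy, rr, hv1, -⟩ := hvalL v hv
    refine ⟨(adj_iff _ _).mpr ⟨fun hc => ?_, Or.inl ?_⟩, hv.1⟩
    · rw [← hc] at hv1; simp at hv1
    · show hRel (HVert.apex i j) v.1
      rw [hv1]; exact ⟨rfl, rfl⟩
  set img := gad hn0 '' L with himgdef
  have himgsub : img ⊆ ESet E i j := by
    rintro p ⟨v, hvL, rfl⟩
    obtain ⟨xx, yy, rr, hv1, hE⟩ := hvalL v hvL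
    rw [gad_testL hn0 hv1]
    exact hE
  have himgcard : img.ncard ≤ mij E i j :=
    Set.ncard_le_ncard himgsub (Set.toFinite _)
  have hDle : D.ncard ≤ mij E i j - img.ncard := by
    have h1 : D.ncard ≤ (ESet E i j \ img).ncard := by
      refine Set.ncard_le_ncard_of_injOn (gad hn0) ?_ ?_ (Set.toFinite _)
      · intro v hvD
        obtain ⟨xx, yy, hv1, hE⟩ := hvalD v hvD
        rw [gad_testD hn0 hv1]
        refine ⟨hE, fun hmem => ?_⟩
        obtain ⟨w, hwL, hgw⟩ := hmem
        obtain ⟨x', y', rr, hw1, hE'⟩ := hvalL w hwL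
        rw [gad_testL hn0 hw1] at hgw
        have hx : x' = xx := congrArg Prod.fst hgw
        have hy : y' = yy := congrArg Prod.snd hgw
        subst hx; subst hy
        exact test_xor hH (⟨hij, hE⟩ : _ ∧ _) hv1 hw1 hvD.1 hwL.1
      · intro u huD w hwD hg
        obtain ⟨xx, yy, hu1, -⟩ := hvalD u huD
        obtain ⟨x', y', hw1, -⟩ := hvalD w hwD
        rw [gad_testD hn0 hu1, gad_testD hn0 hw1] at hg
        have hx : xx = x' := congrArg Prod.fst hg
        have hy : yy = y' := congrArg Prod.snd hg
        exact Subtype.ext (by rw [hu1, hw1, hx, hy])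
    rw [Set.ncard_diff himgsub] at h1
    exact h1
  constructor
  · by_cases hLe : L.Nonempty
    · have h1 : 0 < img.ncard := (Set.ncard_pos (Set.toFinite _)).mpr (hLe.image _)
      omega
    · have hLempty : L = ∅ := Set.not_nonempty_iff_eq_empty.mp hLe
      rw [hsplit, hLempty, Set.ncard_empty]
      omega
  · intro heq
    rw [hsplit] at heq
    have hLne : L.Nonempty := by
      by_contra hLe
      have hLempty : L = ∅ := Set.not_nonempty_iff_eq_empty.mp hLe
      rw [hLempty, Set.ncard_empty] at heq
      have himg0 : img.ncard = 0 := by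
        rw [himgdef, hLempty]
        simp
      omega
    have himgpos : 0 < img.ncard := (Set.ncard_pos (Set.toFinite _)).mpr (hLne.image _)
    have himg1 : img.ncard = 1 := by omega
    have hLcard : L.ncard = n := by omega
    obtain ⟨p0, hp0⟩ := Set.ncard_eq_one.mp himg1
    have hp0img : p0 ∈ img := by rw [hp0]; exact Set.mem_singleton p0
    have hp0E : E i p0.1 j p0.2 := himgsub hp0img
    have hgadL : ∀ v ∈ L, gad hn0 v = p0 := by
      intro v hv
      have hmem : gad hn0 v ∈ img := Set.mem_image_of_mem _ hv
      rw [hp0] at hmem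
      exact hmem
    have hinj : Set.InjOn (ridx hn0) L := by
      intro u hu w hw hr
      obtain ⟨xx, yy, rr, hu1, -⟩ := hvalL u hu
      obtain ⟨x', y', r', hw1, -⟩ := hvalL w hw
      have h1 := hgadL u hu
      rw [gad_testL hn0 hu1] at h1
      have h2 := hgadL w hw
      rw [gad_testL hn0 hw1] at h2
      rw [← h2] at h1
      rw [ridx_testL hn0 hu1, ridx_testL hn0 hw1] at hr
      have hx : xx = x' := congrArg Prod.fst h1
      have hy : yy = y' := congrArg Prod.snd h1
      exact Subtype.ext (by rw [hu1, hw1, hx, hy, hr])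
    have himgL : ridx hn0 '' L = Set.univ := by
      refine (Set.eq_of_subset_of_ncard_le (Set.subset_univ _) ?_ (Set.toFinite _))
      rw [Set.ncard_image_of_injOn hinj, hLcard, Set.ncard_univ, Nat.card_eq_fintype_card,
        Fintype.card_fin]
    refine ⟨p0.1, p0.2, hp0E, fun r => ?_⟩
    have hr : r ∈ ridx hn0 '' L := by rw [himgL]; trivial
    obtain ⟨v, hvL, hvr⟩ := hr
    obtain ⟨xx, yy, r', hv1, -⟩ := hvalL v hvL
    have hg := hgadL v hvL
    rw [gad_testL hn0 hv1] at hg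
    rw [ridx_testL hn0 hv1] at hvr
    have hx : xx = p0.1 := congrArg Prod.fst hg
    have hy : yy = p0.2 := congrArg Prod.snd hg
    have hveq : v = ⟨HVert.testL i j p0.1 p0.2 r, ⟨hij, hp0E⟩⟩ :=
      Subtype.ext (by rw [hv1, hx, hy, hvr])
    rw [← hveq]
    exact hvL.1


/-! ### Port gadget counting -/

lemma card_filter_le (x : Fin n) :
    ((Finset.univ.filter (fun r : Fin n => (r : ℕ) + (x : ℕ) + 2 ≤ n)).card
      = n - (x : ℕ) - 1) := by
  classical
  have hxlt : (x : ℕ) < n := x.2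
  have heqf : (Finset.univ.filter (fun r : Fin n => (r : ℕ) + (x : ℕ) + 2 ≤ n))
      = (Finset.univ.filter (fun r : Fin n => (r : ℕ) < n - (x : ℕ) - 1)) := by
    apply Finset.filter_congr
    intro r _
    constructor <;> (intro h; omega)
  rw [heqf, finCardLt _ _ (by omega)]

lemma card_filter_gt (x : Fin n) :
    ((Finset.univ.filter (fun r : Fin n => ¬((r : ℕ) + (x : ℕ) + 2 ≤ n))).card
      = (x : ℕ) + 1) := by
  classical
  have hxlt : (x : ℕ) < n := x.2
  have hsum := Finset.card_filter_add_card_filter_not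
    (s := (Finset.univ : Finset (Fin n))) (fun r : Fin n => (r : ℕ) + (x : ℕ) + 2 ≤ n)
  rw [card_filter_le x] at hsum
  rw [Finset.card_univ, Fintype.card_fin] at hsum
  omega

lemma port_count_left (hH : HarmlessSet (HBig E) (hT E) S) (hn : 2 ≤ n) {i j : Fin k}
    (hij : i < j) {x y : Fin n} (hE : E i x j y)
    (hlights : ∀ r : Fin n, (⟨HVert.testL i j x y r, ⟨hij, hE⟩⟩ : HV k n E) ∈ S)
    (hsel : (S ∩ SelDSet E i).ncard + (S ∩ SelLSet E i).ncard = n) :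
    (S ∩ SelLSet E i).ncard = (x : ℕ) + 1 := by
  classical
  have hn0 : 0 < n := by omega
  have hxlt : (x : ℕ) < n := x.2
  set F1 : Finset (HV k n E) :=
    (Finset.univ.filter (fun r : Fin n => (r : ℕ) + (x : ℕ) + 2 ≤ n)).image
      (fun r => (⟨HVert.testL i j x y r, ⟨hij, hE⟩⟩ : HV k n E)) with hF1
  have hinj1 : Function.Injective
      (fun r : Fin n => (⟨HVert.testL i j x y r, ⟨hij, hE⟩⟩ : HV k n E)) := by
    intro r r' h
    simpa using congrArg Subtype.val h
  have hF1card : F1.card = n - (x : ℕ) - 1 := by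
    rw [hF1, Finset.card_image_of_injective _ hinj1, card_filter_le x]
  have hdisj1 : Disjoint (S ∩ SelLSet E i) (↑F1 : Set (HV k n E)) := by
    rw [Set.disjoint_left]
    rintro v ⟨-, s, hv1⟩ hvF
    rw [hF1] at hvF
    simp only [Finset.coe_image, Set.mem_image, Finset.mem_coe, Finset.mem_filter] at hvF
    obtain ⟨r, -, hr⟩ := hvF
    rw [← hr] at hv1
    simp at hv1
  have hsub1 : ((S ∩ SelLSet E i) ∪ ↑F1).ncard ≤ n := by
    refine ncard_le_of_subset_nbhd hH (x := ⟨HVert.port i j true false, hij⟩) rfl ?_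
    rintro v (⟨hvS, s, hv1⟩ | hvF)
    · refine ⟨(adj_iff _ _).mpr ⟨fun hc => ?_, Or.inl ?_⟩, hvS⟩
      · rw [← hc] at hv1; simp at hv1
      · show hRel (HVert.port i j true false) v.1
        rw [hv1]; exact ⟨rfl, rfl⟩
    · rw [hF1] at hvF
      simp only [Finset.coe_image, Set.mem_image, Finset.mem_coe, Finset.mem_filter,
        Finset.mem_univ, true_and] at hvF
      obtain ⟨r, hrle, hr⟩ := hvF
      refine ⟨(adj_iff _ _).mpr ⟨fun hc => ?_, Or.inl ?_⟩, by rw [← hr]; exact hlights r⟩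
      · rw [← hr] at hc
        exact absurd (congrArg Subtype.val hc) (by simp)
      · show hRel (HVert.port i j true false) v.1
        rw [← hr]
        exact ⟨rfl, rfl, Or.inl ⟨rfl, hrle⟩⟩
  rw [Set.ncard_union_eq hdisj1 (Set.toFinite _) (Set.toFinite _),
    Set.ncard_coe_finset, hF1card] at hsub1
  set F2 : Finset (HV k n E) :=
    (Finset.univ.filter (fun r : Fin n => ¬((r : ℕ) + (x : ℕ) + 2 ≤ n))).image
      (fun r => (⟨HVert.testL i j x y r, ⟨hij, hE⟩⟩ : HV k n E)) with hF2
  have hF2card : F2.card = (x : ℕ) + 1 := by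
    rw [hF2, Finset.card_image_of_injective _ hinj1, card_filter_gt x]
  have hdisj2 : Disjoint (S ∩ SelDSet E i) (↑F2 : Set (HV k n E)) := by
    rw [Set.disjoint_left]
    rintro v ⟨-, s, hv1⟩ hvF
    rw [hF2] at hvF
    simp only [Finset.coe_image, Set.mem_image, Finset.mem_coe, Finset.mem_filter] at hvF
    obtain ⟨r, -, hr⟩ := hvF
    rw [← hr] at hv1
    simp at hv1
  have hsub2 : ((S ∩ SelDSet E i) ∪ ↑F2).ncard ≤ n := by
    refine ncard_le_of_subset_nbhd hH (x := ⟨HVert.port i j false false, hij⟩) rfl ?_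
    rintro v (⟨hvS, s, hv1⟩ | hvF)
    · refine ⟨(adj_iff _ _).mpr ⟨fun hc => ?_, Or.inl ?_⟩, hvS⟩
      · rw [← hc] at hv1; simp at hv1
      · show hRel (HVert.port i j false false) v.1
        rw [hv1]; exact ⟨rfl, rfl⟩
    · rw [hF2] at hvF
      simp only [Finset.coe_image, Set.mem_image, Finset.mem_coe, Finset.mem_filter,
        Finset.mem_univ, true_and] at hvF
      obtain ⟨r, hrgt, hr⟩ := hvF
      refine ⟨(adj_iff _ _).mpr ⟨fun hc => ?_, Or.inl ?_⟩, by rw [← hr]; exact hlights r⟩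
      · rw [← hr] at hc
        exact absurd (congrArg Subtype.val hc) (by simp)
      · show hRel (HVert.port i j false false) v.1
        rw [← hr]
        have hgt : n < (r : ℕ) + (x : ℕ) + 2 := by omega
        exact ⟨rfl, rfl, Or.inr ⟨rfl, hgt⟩⟩
  rw [Set.ncard_union_eq hdisj2 (Set.toFinite _) (Set.toFinite _),
    Set.ncard_coe_finset, hF2card] at hsub2
  omega

lemma port_count_right (hH : HarmlessSet (HBig E) (hT E) S) (hn : 2 ≤ n) {i j : Fin k}
    (hij : i < j) {x y : Fin n} (hE : E i x j y)
    (hlights : ∀ r : Fin n, (⟨HVert.testL i j x y r, ⟨hij, hE⟩⟩ : HV k n E) ∈ S)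
    (hsel : (S ∩ SelDSet E j).ncard + (S ∩ SelLSet E j).ncard = n) :
    (S ∩ SelLSet E j).ncard = (y : ℕ) + 1 := by
  classical
  have hn0 : 0 < n := by omega
  have hylt : (y : ℕ) < n := y.2
  set F1 : Finset (HV k n E) :=
    (Finset.univ.filter (fun r : Fin n => (r : ℕ) + (y : ℕ) + 2 ≤ n)).image
      (fun r => (⟨HVert.testL i j x y r, ⟨hij, hE⟩⟩ : HV k n E)) with hF1
  have hinj1 : Function.Injective
      (fun r : Fin n => (⟨HVert.testL i j x y r, ⟨hij, hE⟩⟩ : HV k n E)) := by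
    intro r r' h
    simpa using congrArg Subtype.val h
  have hF1card : F1.card = n - (y : ℕ) - 1 := by
    rw [hF1, Finset.card_image_of_injective _ hinj1, card_filter_le y]
  have hdisj1 : Disjoint (S ∩ SelLSet E j) (↑F1 : Set (HV k n E)) := by
    rw [Set.disjoint_left]
    rintro v ⟨-, s, hv1⟩ hvF
    rw [hF1] at hvF
    simp only [Finset.coe_image, Set.mem_image, Finset.mem_coe, Finset.mem_filter] at hvF
    obtain ⟨r, -, hr⟩ := hvF
    rw [← hr] at hv1
    simp at hv1
  have hsub1 : ((S ∩ SelLSet E j) ∪ ↑F1).ncard ≤ n := by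
    refine ncard_le_of_subset_nbhd hH (x := ⟨HVert.port i j true true, hij⟩) rfl ?_
    rintro v (⟨hvS, s, hv1⟩ | hvF)
    · refine ⟨(adj_iff _ _).mpr ⟨fun hc => ?_, Or.inl ?_⟩, hvS⟩
      · rw [← hc] at hv1; simp at hv1
      · show hRel (HVert.port i j true true) v.1
        rw [hv1]; exact ⟨rfl, rfl⟩
    · rw [hF1] at hvF
      simp only [Finset.coe_image, Set.mem_image, Finset.mem_coe, Finset.mem_filter,
        Finset.mem_univ, true_and] at hvF
      obtain ⟨r, hrle, hr⟩ := hvF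
      refine ⟨(adj_iff _ _).mpr ⟨fun hc => ?_, Or.inl ?_⟩, by rw [← hr]; exact hlights r⟩
      · rw [← hr] at hc
        exact absurd (congrArg Subtype.val hc) (by simp)
      · show hRel (HVert.port i j true true) v.1
        rw [← hr]
        exact ⟨rfl, rfl, Or.inl ⟨rfl, hrle⟩⟩
  rw [Set.ncard_union_eq hdisj1 (Set.toFinite _) (Set.toFinite _),
    Set.ncard_coe_finset, hF1card] at hsub1
  set F2 : Finset (HV k n E) :=
    (Finset.univ.filter (fun r : Fin n => ¬((r : ℕ) + (y : ℕ) + 2 ≤ n))).image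
      (fun r => (⟨HVert.testL i j x y r, ⟨hij, hE⟩⟩ : HV k n E)) with hF2
  have hF2card : F2.card = (y : ℕ) + 1 := by
    rw [hF2, Finset.card_image_of_injective _ hinj1, card_filter_gt y]
  have hdisj2 : Disjoint (S ∩ SelDSet E j) (↑F2 : Set (HV k n E)) := by
    rw [Set.disjoint_left]
    rintro v ⟨-, s, hv1⟩ hvF
    rw [hF2] at hvF
    simp only [Finset.coe_image, Set.mem_image, Finset.mem_coe, Finset.mem_filter] at hvF
    obtain ⟨r, -, hr⟩ := hvF
    rw [← hr] at hv1
    simp at hv1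
  have hsub2 : ((S ∩ SelDSet E j) ∪ ↑F2).ncard ≤ n := by
    refine ncard_le_of_subset_nbhd hH (x := ⟨HVert.port i j false true, hij⟩) rfl ?_
    rintro v (⟨hvS, s, hv1⟩ | hvF)
    · refine ⟨(adj_iff _ _).mpr ⟨fun hc => ?_, Or.inl ?_⟩, hvS⟩
      · rw [← hc] at hv1; simp at hv1
      · show hRel (HVert.port i j false true) v.1
        rw [hv1]; exact ⟨rfl, rfl⟩
    · rw [hF2] at hvF
      simp only [Finset.coe_image, Set.mem_image, Finset.mem_coe, Finset.mem_filter,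
        Finset.mem_univ, true_and] at hvF
      obtain ⟨r, hrgt, hr⟩ := hvF
      refine ⟨(adj_iff _ _).mpr ⟨fun hc => ?_, Or.inl ?_⟩, by rw [← hr]; exact hlights r⟩
      · rw [← hr] at hc
        exact absurd (congrArg Subtype.val hc) (by simp)
      · show hRel (HVert.port i j false true) v.1
        rw [← hr]
        have hgt : n < (r : ℕ) + (y : ℕ) + 2 := by omega
        exact ⟨rfl, rfl, Or.inr ⟨rfl, hgt⟩⟩
  rw [Set.ncard_union_eq hdisj2 (Set.toFinite _) (Set.toFinite _),
    Set.ncard_coe_finset, hF2card] at hsub2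
  omega


/-! ### Total edge count -/

lemma mTotalEq :
    mTotal E = ∑ p ∈ ((Finset.univ : Finset (Fin k × Fin k)).filter (fun p => p.1 < p.2)),
      mij E p.1 p.2 := by
  classical
  have hfin : ({q : (Fin k × Fin n) × (Fin k × Fin n) |
      q.1.1 < q.2.1 ∧ E q.1.1 q.1.2 q.2.1 q.2.2}).Finite := Set.toFinite _
  rw [mTotal, Set.ncard_eq_toFinset_card _ hfin]
  rw [Finset.card_eq_sum_card_fiberwise
    (f := fun q : (Fin k × Fin n) × (Fin k × Fin n) => (q.1.1, q.2.1))
    (t := (Finset.univ : Finset (Fin k × Fin k))) (fun q _ => Finset.mem_univ _)]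
  rw [Finset.sum_filter]
  apply Finset.sum_congr rfl
  intro b _
  by_cases hb : b.1 < b.2
  · rw [if_pos hb, mij, Set.ncard_eq_toFinset_card _ (Set.toFinite _)]
    refine Finset.card_bij' (fun q _ => (q.1.2, q.2.2))
      (fun p _ => ((b.1, p.1), (b.2, p.2))) ?_ ?_ ?_ ?_
    · intro a ha
      simp only [Finset.mem_filter, Set.Finite.mem_toFinset, Set.mem_setOf_eq] at ha
      obtain ⟨⟨-, hE'⟩, hfib⟩ := ha
      have h1 : a.1.1 = b.1 := congrArg Prod.fst hfib
      have h2 : a.2.1 = b.2 := congrArg Prod.snd hfib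
      simp only [Set.Finite.mem_toFinset, Set.mem_setOf_eq]
      rw [← h1, ← h2]
      exact hE'
    · intro p hp
      simp only [Set.Finite.mem_toFinset, Set.mem_setOf_eq] at hp
      simp only [Finset.mem_filter, Set.Finite.mem_toFinset, Set.mem_setOf_eq]
      exact ⟨⟨hb, hp⟩, trivial⟩
    · intro a ha
      simp only [Finset.mem_filter] at ha
      have h1 : a.1.1 = b.1 := congrArg Prod.fst ha.2
      have h2 : a.2.1 = b.2 := congrArg Prod.snd ha.2
      ext <;> simp [h1, h2]
    · intro p _
      rfl
  · rw [if_neg hb, Finset.card_eq_zero, Finset.eq_empty_iff_forall_notMem]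
    intro q hq
    simp only [Finset.mem_filter, Set.Finite.mem_toFinset, Set.mem_setOf_eq] at hq
    obtain ⟨⟨hlt, -⟩, hfib⟩ := hq
    have h1 : q.1.1 = b.1 := congrArg Prod.fst hfib
    have h2 : q.2.1 = b.2 := congrArg Prod.snd hfib
    rw [h1, h2] at hlt
    exact hb hlt

/-! ### The bound function -/

noncomputable def BB (E : Fin k → Fin n → Fin k → Fin n → Prop) :
    (Fin k ⊕ ((Fin k × Fin k) ⊕ Unit)) → ℕ
  | Sum.inl _ => n
  | Sum.inr (Sum.inl p) => if p.1 < p.2 then mij E p.1 p.2 + (n - 1) else 0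
  | Sum.inr (Sum.inr _) => 0

lemma sum_BB :
    ∑ b : Fin k ⊕ ((Fin k × Fin k) ⊕ Unit), BB E b
      = k * n + (Nat.choose k 2 * (n - 1) + mTotal E) := by
  classical
  rw [Fintype.sum_sum_type, Fintype.sum_sum_type]
  have h1 : ∑ i : Fin k, BB E (Sum.inl i) = k * n := by
    simp [BB, Finset.sum_const, mul_comm]
  have h3 : ∑ u : Unit, BB E (Sum.inr (Sum.inr u)) = 0 := by simp [BB]
  have h2 : ∑ p : Fin k × Fin k, BB E (Sum.inr (Sum.inl p))
      = Nat.choose k 2 * (n - 1) + mTotal E := by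
    have : ∀ p : Fin k × Fin k, BB E (Sum.inr (Sum.inl p))
        = if p.1 < p.2 then mij E p.1 p.2 + (n - 1) else 0 := fun p => rfl
    simp only [this]
    rw [← Finset.sum_filter]
    rw [Finset.sum_add_distrib, Finset.sum_const, cardPairsLt, smul_eq_mul, ← mTotalEq]
    ring
  rw [h1, h2, h3]
  omega

end MCCAux


/-- Soundness: if (for `n ≥ 2`) the constructed instance `(H, t)` has a harmless
set of size at least `C(k,2)·(n−1) + k·n + m`, then `G` contains a
multicoloured clique on `k` vertices. -/
theorem harmless_to_multicolouredClique (k n : ℕ) (hk : 2 ≤ k) (hn : 2 ≤ n)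
    (E : Fin k → Fin n → Fin k → Fin n → Prop)
    (hsymm : ∀ i x j y, E i x j y → E j y i x)
    (hpart : ∀ i x j y, E i x j y → i ≠ j)
    (hS : ∃ S : Set {v : HVert k n // HValid E v},
      HarmlessSet (HBig E) (hT E) S ∧
      Nat.choose k 2 * (n - 1) + k * n + mTotal E ≤ S.ncard) :
    ∃ c : Fin k → Fin n, ∀ i j : Fin k, i ≠ j → E i (c i) j (c j) := by
  classical
  obtain ⟨S, hH, hCard⟩ := hS
  have hn0 : 0 < n := by omega
  set T : Finset (MCCAux.HV k n E) := (Set.toFinite S).toFinset with hTdef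
  have hmemT : ∀ w, w ∈ T ↔ w ∈ S := fun w => Set.Finite.mem_toFinset _
  have hTS : S.ncard = T.card := Set.ncard_eq_toFinset_card S (Set.toFinite S)
  have hfib : T.card = ∑ b : Fin k ⊕ ((Fin k × Fin k) ⊕ Unit),
      (T.filter (fun a => MCCAux.idx a = b)).card :=
    Finset.card_eq_sum_card_fiberwise (fun x _ => Finset.mem_univ _)
  -- coercions of the fibers
  have hcoe1 : ∀ i : Fin k,
      ((T.filter (fun a => MCCAux.idx a = Sum.inl i)) : Set (MCCAux.HV k n E))
        = S ∩ (MCCAux.SelDSet E i ∪ MCCAux.SelLSet E i) := by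
    intro i
    ext v
    simp only [Finset.coe_filter, Set.mem_setOf_eq, hmemT, Set.mem_inter_iff, Set.mem_union,
      MCCAux.SelDSet, MCCAux.SelLSet]
    constructor
    · rintro ⟨hvS, hidx⟩
      refine ⟨hvS, ?_⟩
      rcases MCCAux.good_of_mem hH hvS with ⟨i', s, h⟩ | ⟨i', s, h⟩ |
        ⟨i', j', xx, yy, h⟩ | ⟨i', j', xx, yy, rr, h⟩
      · simp only [MCCAux.idx, h, Sum.inl.injEq] at hidx
        exact Or.inl ⟨s, by rw [h, hidx]⟩
      · simp only [MCCAux.idx, h, Sum.inl.injEq] at hidx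
        exact Or.inr ⟨s, by rw [h, hidx]⟩
      · simp [MCCAux.idx, h] at hidx
      · simp [MCCAux.idx, h] at hidx
    · rintro ⟨hvS, (⟨s, h⟩ | ⟨s, h⟩)⟩ <;> exact ⟨hvS, by simp [MCCAux.idx, h]⟩
  have hcoe2 : ∀ i j : Fin k,
      ((T.filter (fun a => MCCAux.idx a = Sum.inr (Sum.inl (i, j)))) :
          Set (MCCAux.HV k n E))
        = S ∩ (MCCAux.PairDSet E i j ∪ MCCAux.PairLSet E i j) := by
    intro i j
    ext v
    simp only [Finset.coe_filter, Set.mem_setOf_eq, hmemT, Set.mem_inter_iff, Set.mem_union,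
      MCCAux.PairDSet, MCCAux.PairLSet]
    constructor
    · rintro ⟨hvS, hidx⟩
      refine ⟨hvS, ?_⟩
      rcases MCCAux.good_of_mem hH hvS with ⟨i', s, h⟩ | ⟨i', s, h⟩ |
        ⟨i', j', xx, yy, h⟩ | ⟨i', j', xx, yy, rr, h⟩
      · simp [MCCAux.idx, h] at hidx
      · simp [MCCAux.idx, h] at hidx
      · simp only [MCCAux.idx, h, Sum.inr.injEq, Sum.inl.injEq, Prod.mk.injEq] at hidx
        exact Or.inl ⟨xx, yy, by rw [h, hidx.1, hidx.2]⟩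
      · simp only [MCCAux.idx, h, Sum.inr.injEq, Sum.inl.injEq, Prod.mk.injEq] at hidx
        exact Or.inr ⟨xx, yy, rr, by rw [h, hidx.1, hidx.2]⟩
    · rintro ⟨hvS, (⟨xx, yy, h⟩ | ⟨xx, yy, rr, h⟩)⟩ <;> exact ⟨hvS, by simp [MCCAux.idx, h]⟩
  have hempty2 : ∀ p : Fin k × Fin k, ¬(p.1 < p.2) →
      T.filter (fun a => MCCAux.idx a = Sum.inr (Sum.inl p)) = ∅ := by
    rintro ⟨p1, p2⟩ hp
    rw [Finset.eq_empty_iff_forall_notMem]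
    intro v hv
    rw [Finset.mem_filter, hmemT] at hv
    obtain ⟨hvS, hidx⟩ := hv
    rcases MCCAux.good_of_mem hH hvS with ⟨i', s, h⟩ | ⟨i', s, h⟩ |
      ⟨i', j', xx, yy, h⟩ | ⟨i', j', xx, yy, rr, h⟩
    · simp [MCCAux.idx, h] at hidx
    · simp [MCCAux.idx, h] at hidx
    · simp only [MCCAux.idx, h, Sum.inr.injEq, Sum.inl.injEq, Prod.mk.injEq] at hidx
      have hval := v.2
      rw [h] at hval
      exact hp (hidx.1 ▸ hidx.2 ▸ hval.1)
    · simp only [MCCAux.idx, h, Sum.inr.injEq, Sum.inl.injEq, Prod.mk.injEq] at hidx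
      have hval := v.2
      rw [h] at hval
      exact hp (hidx.1 ▸ hidx.2 ▸ hval.1)

  have hempty3 : T.filter (fun a => MCCAux.idx a = Sum.inr (Sum.inr ())) = ∅ := by
    rw [Finset.eq_empty_iff_forall_notMem]
    intro v hv
    rw [Finset.mem_filter, hmemT] at hv
    obtain ⟨hvS, hidx⟩ := hv
    rcases MCCAux.good_of_mem hH hvS with ⟨i', s, h⟩ | ⟨i', s, h⟩ |
      ⟨i', j', xx, yy, h⟩ | ⟨i', j', xx, yy, rr, h⟩ <;> simp [MCCAux.idx, h] at hidx
  -- pointwise bounds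
  have hble : ∀ b ∈ (Finset.univ : Finset (Fin k ⊕ ((Fin k × Fin k) ⊕ Unit))),
      (T.filter (fun a => MCCAux.idx a = b)).card ≤ MCCAux.BB E b := by
    rintro (i | p | u) -
    · rw [← Set.ncard_coe_finset, hcoe1 i]
      exact MCCAux.sel_bound hH hn0 i
    · obtain ⟨i, j⟩ := p
      by_cases hij : i < j
      · have hBB : MCCAux.BB E (Sum.inr (Sum.inl (i, j))) = MCCAux.mij E i j + (n - 1) := by
          simp [MCCAux.BB, hij]
        rw [hBB, ← Set.ncard_coe_finset, hcoe2 i j]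
        exact (MCCAux.pair_bound_tight hH hn hij).1
      · rw [hempty2 (i, j) hij]
        simp
    · rw [hempty3]
      simp
  have hsum_le : ∑ b : Fin k ⊕ ((Fin k × Fin k) ⊕ Unit),
      (T.filter (fun a => MCCAux.idx a = b)).card
        ≤ ∑ b : Fin k ⊕ ((Fin k × Fin k) ⊕ Unit), MCCAux.BB E b :=
    Finset.sum_le_sum hble
  have htot : ∑ b : Fin k ⊕ ((Fin k × Fin k) ⊕ Unit), MCCAux.BB E b
      = k * n + (Nat.choose k 2 * (n - 1) + mTotal E) := MCCAux.sum_BB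
  have hsum_eq : ∑ b : Fin k ⊕ ((Fin k × Fin k) ⊕ Unit),
      (T.filter (fun a => MCCAux.idx a = b)).card
        = ∑ b : Fin k ⊕ ((Fin k × Fin k) ⊕ Unit), MCCAux.BB E b := by
    rw [htot]
    rw [hTS, hfib] at hCard
    rw [htot] at hsum_le
    omega
  have hfibeq := (Finset.sum_eq_sum_iff_of_le hble).mp hsum_eq
  -- selection partitions
  have hselpart : ∀ i : Fin k,
      (S ∩ MCCAux.SelDSet E i).ncard + (S ∩ MCCAux.SelLSet E i).ncard = n := by
    intro i
    have h := hfibeq (Sum.inl i) (Finset.mem_univ _)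
    rw [← Set.ncard_coe_finset, hcoe1 i, MCCAux.sel_split i] at h
    exact h
  -- pair tightness
  have hpair : ∀ i j : Fin k, ∀ hij : i < j, ∃ x y, ∃ hE : E i x j y,
      ∀ r : Fin n, (⟨HVert.testL i j x y r, ⟨hij, hE⟩⟩ : MCCAux.HV k n E) ∈ S := by
    intro i j hij
    have h := hfibeq (Sum.inr (Sum.inl (i, j))) (Finset.mem_univ _)
    have hBB : MCCAux.BB E (Sum.inr (Sum.inl (i, j))) = MCCAux.mij E i j + (n - 1) := by
      simp [MCCAux.BB, hij]
    rw [hBB, ← Set.ncard_coe_finset, hcoe2 i j] at h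
    exact (MCCAux.pair_bound_tight hH hn hij).2 h
  -- construct the clique
  have hkey : ∀ i j : Fin k, ∀ hij : i < j,
      ((S ∩ MCCAux.SelLSet E i).ncard - 1) + 1 < n + 1 ∧
      ((S ∩ MCCAux.SelLSet E j).ncard - 1) + 1 < n + 1 := by
    intro i j hij
    obtain ⟨x, y, hE, hlights⟩ := hpair i j hij
    have h1 := MCCAux.port_count_left hH hn hij hE hlights (hselpart i)
    have h2 := MCCAux.port_count_right hH hn hij hE hlights (hselpart j)
    have hx : (x : ℕ) < n := x.2
    have hy : (y : ℕ) < n := y.2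
    omega
  have hclt : ∀ i : Fin k, (S ∩ MCCAux.SelLSet E i).ncard - 1 < n := by
    intro i
    rcases Fin.pos_iff_nonempty.mp (by omega : 0 < k) with ⟨i0⟩
    by_cases hik : (i : ℕ) = 0
    · have hlt : i < ⟨1, by omega⟩ := by
        rw [Fin.lt_def]
        show (i : ℕ) < 1
        omega
      exact Nat.lt_of_succ_lt_succ (hkey i ⟨1, by omega⟩ hlt).1
    · have hlt : (⟨0, by omega⟩ : Fin k) < i := by
        rw [Fin.lt_def]
        show 0 < (i : ℕ)
        omega
      exact Nat.lt_of_succ_lt_succ (hkey ⟨0, by omega⟩ i hlt).2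
  refine ⟨fun i => ⟨(S ∩ MCCAux.SelLSet E i).ncard - 1, hclt i⟩, ?_⟩
  have key : ∀ i j : Fin k, ∀ hij : i < j,
      E i ⟨(S ∩ MCCAux.SelLSet E i).ncard - 1, hclt i⟩
        j ⟨(S ∩ MCCAux.SelLSet E j).ncard - 1, hclt j⟩ := by
    intro i j hij
    obtain ⟨x, y, hE, hlights⟩ := hpair i j hij
    have h1 := MCCAux.port_count_left hH hn hij hE hlights (hselpart i)
    have h2 := MCCAux.port_count_right hH hn hij hE hlights (hselpart j)
    have hci : (⟨(S ∩ MCCAux.SelLSet E i).ncard - 1, hclt i⟩ : Fin n) = x :=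
      Fin.ext (by show (S ∩ MCCAux.SelLSet E i).ncard - 1 = (x : ℕ); omega)
    have hcj : (⟨(S ∩ MCCAux.SelLSet E j).ncard - 1, hclt j⟩ : Fin n) = y :=
      Fin.ext (by show (S ∩ MCCAux.SelLSet E j).ncard - 1 = (y : ℕ); omega)
    rw [hci, hcj]
    exact hE
  intro i j hne
  rcases hne.lt_or_gt with h | h
  · exact key i j h
  · exact hsymm _ _ _ _ (key j i h)
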